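/- Let λ ∈ (0,1). Define σ_t := tanh(t/λ + artanh(λ)) and σ_{F,t}² := 1 − (1 − λ²)e^{−2t}. Then (1 − σ_{F,t}²)/(1 − σ_t²) = ((1−λ²)/4)·(e^{−t(1+1/λ) − artanh(λ)} + e^{t(1/λ − 1) + artanh(λ)})², and this ratio tends to infinity as t → ∞. -/

import Mathlib

open Filter

/-- The inverse hyperbolic tangent, artanh(x) = (1/2) log((1+x)/(1−x)). -/
noncomputable def artanh (x : ℝ) : ℝ := (1 / 2) * Real.log ((1 + x) / (1 - x))

lemma one_sub_tanh_sq (u : ℝ) : 1 - Real.tanh u ^ 2 = 1 / Real.cosh u ^ 2 := by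
  have hc : Real.cosh u ≠ 0 := (Real.cosh_pos u).ne'
  have h := Real.cosh_sq_sub_sinh_sq u
  rw [Real.tanh_eq_sinh_div_cosh]
  field_simp
  exact h

/-- With σ_t = tanh(t/λ + artanh λ) and σ_{F,t}² = 1 − (1−λ²)e^{−2t},
the ratio (1 − σ_{F,t}²)/(1 − σ_t²) equals the stated explicit expression and
tends to infinity as t → ∞. -/
theorem gaussian_flow_vs_fokker_planck (lam : ℝ) (hlam : lam ∈ Set.Ioo (0 : ℝ) 1)
    (σ σF2 : ℝ → ℝ)
    (hσ : ∀ t, σ t = Real.tanh (t / lam + artanh lam))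
    (hσF2 : ∀ t, σF2 t = 1 - (1 - lam ^ 2) * Real.exp (-2 * t)) :
    (∀ t, (1 - σF2 t) / (1 - (σ t) ^ 2) =
        ((1 - lam ^ 2) / 4) *
          (Real.exp (-t * (1 + 1 / lam) - artanh lam) +
            Real.exp (t * (1 / lam - 1) + artanh lam)) ^ 2) ∧
      Tendsto (fun t => (1 - σF2 t) / (1 - (σ t) ^ 2)) atTop atTop := by
  obtain ⟨hl0, hl1⟩ := hlam
  have hlne : lam ≠ 0 := ne_of_gt hl0
  have hid : ∀ t, (1 - σF2 t) / (1 - (σ t) ^ 2) =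
      ((1 - lam ^ 2) / 4) *
        (Real.exp (-t * (1 + 1 / lam) - artanh lam) +
          Real.exp (t * (1 / lam - 1) + artanh lam)) ^ 2 := by
    intro t
    set u := t / lam + artanh lam with hu
    rw [hσ t, hσF2 t, one_sub_tanh_sq u]
    have e1 : Real.exp (-2 * t) = Real.exp (-t) ^ 2 := by
      rw [sq, ← Real.exp_add]; ring_nf
    have e2 : Real.exp (-t * (1 + 1 / lam) - artanh lam)
        = Real.exp (-t) * Real.exp (-u) := by
      rw [← Real.exp_add]; congr 1; rw [hu]; field_simp; ring
    have e3 : Real.exp (t * (1 / lam - 1) + artanh lam)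
        = Real.exp (-t) * Real.exp u := by
      rw [← Real.exp_add]; congr 1; rw [hu]; field_simp; ring
    have ecosh : Real.cosh u = (Real.exp u + Real.exp (-u)) / 2 := Real.cosh_eq u
    rw [e1, e2, e3, ecosh, one_div, div_eq_mul_inv, inv_inv]
    ring
  refine ⟨hid, ?_⟩
  have hc : (0:ℝ) < (1 - lam ^ 2) / 4 := by nlinarith
  have hslope : (0:ℝ) < 1 / lam - 1 := by
    have : 1 < 1 / lam := by rw [lt_div_iff₀ hl0]; linarith
    linarith
  have hg : Tendsto (fun t : ℝ => ((1 - lam ^ 2) / 4) *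
      Real.exp (t * (1 / lam - 1) + artanh lam) ^ 2) atTop atTop := by
    apply Tendsto.const_mul_atTop hc
    have h1 : Tendsto (fun t : ℝ => t * (1 / lam - 1) + artanh lam) atTop atTop :=
      (tendsto_id.atTop_mul_const hslope).atTop_add tendsto_const_nhds
    have h2 : Tendsto (fun t : ℝ => Real.exp (t * (1 / lam - 1) + artanh lam)) atTop atTop :=
      Real.tendsto_exp_atTop.comp h1
    exact h2.atTop_mul_atTop₀ h2 |>.congr (fun t => (sq _).symm)
  apply tendsto_atTop_mono ?_ hg
  intro t
  rw [hid t]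
  have hA := Real.exp_pos (-t * (1 + 1 / lam) - artanh lam)
  have hB := Real.exp_pos (t * (1 / lam - 1) + artanh lam)
  nlinarith [mul_nonneg hc.le (mul_pos hA hB).le, mul_nonneg hc.le (mul_pos hA hA).le]
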